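/- Let S be a paracell in X with opposite paracell S', and define U_S = Σ_{ν=1}^{|X|} Σ_{(J_1,...,J_ν) ∈ M_ν(S')} (−1)^{ν−1} {J_1,...,J_ν} ∈ A(X), where M_ν(S') is the set of ν-chains associated to S'. Then Î · U_S = 0 for every I ∈ S', and consequently (1−Î)·U_S = U_S for every I ∈ S'. -/

import Mathlib

open scoped Classical

namespace GRF

variable {α : Type*} [DecidableEq α]

/-- `J` is a proper (nonempty, not everything) subset of `X`. -/
def IsProperSubset (X J : Finset α) : Prop := J ⊆ X ∧ J ≠ ∅ ∧ J ≠ X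

/-- A proper sequence in `P(X)`: a nonempty list of pairwise disjoint nonempty
subsets of `X` with union `X`. -/
def IsProperSeq (X : Finset α) (c : List (Finset α)) : Prop :=
  c ≠ [] ∧ (∀ J ∈ c, J ≠ ∅) ∧ List.Pairwise (fun I J => I ∩ J = ∅) c ∧
    c.foldr (· ∪ ·) ∅ = X

/-- The product of two sequences: all `A_i ∩ B_j`, ordered first by `j` then by `i`,
with empty intersections deleted. -/
noncomputable def seqMul (a b : List (Finset α)) : List (Finset α) :=
  ((b.map fun B => a.map fun A => A ∩ B).flatten).filter fun J => J ≠ ∅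

/-- The set `S' = {J ⊆ X : X \ J ∈ S}` opposite to `S`. -/
def opp (X : Finset α) (S : Set (Finset α)) : Set (Finset α) :=
  {J | J ⊆ X ∧ X \ J ∈ S}

/-- A paracell associated to `X`. -/
def IsParacell (X : Finset α) (S : Set (Finset α)) : Prop :=
  S.Nonempty ∧ (∀ J ∈ S, IsProperSubset X J) ∧
    ∀ I ∈ S, ∀ J ∈ S, I ∩ J ∈ S ∨ I ∪ J ∈ S

/-- A precell associated to `X`. -/
def IsPrecell (X : Finset α) (S : Set (Finset α)) : Prop :=
  IsParacell X S ∧ ∀ J : Finset α, IsProperSubset X J → J ∈ S ∨ X \ J ∈ S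

/-- A cell associated to `X`: a precell admitting real weights with zero total sum,
positive on all members of the cell. -/
def IsCell (X : Finset α) (S : Set (Finset α)) : Prop :=
  IsPrecell X S ∧ ∃ s : α → ℝ,
    (∑ j ∈ X, s j) = 0 ∧ ∀ J ∈ S, 0 < ∑ j ∈ J, s j

/-- `Y ↓ S` for `S` a paracell associated to `X`. -/
def cellDown (Y X : Finset α) (S : Set (Finset α)) : Set (Finset α) :=
  {J | IsProperSubset (Y ∪ X) J ∧ (J ∩ X = X ∨ J ∩ X ∈ S)}

/-- `Y ↑ S'` for `S'` a paracell associated to `X`. -/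
def cellUp (Y X : Finset α) (S : Set (Finset α)) : Set (Finset α) :=
  {J | IsProperSubset (Y ∪ X) J ∧ (J ∩ X = ∅ ∨ J ∩ X ∈ S)}

/-- `Y ↓ j` for a single index `j`. -/
def ptDown (Y : Finset α) (j : α) : Set (Finset α) :=
  {J | IsProperSubset (insert j Y) J ∧ j ∈ J}

/-- `Y ↑ j` for a single index `j`. -/
def ptUp (Y : Finset α) (j : α) : Set (Finset α) :=
  {J | IsProperSubset (insert j Y) J ∧ j ∉ J}

/-- The underlying vector space of the algebra `A(X)`: formal complex linear
combinations of sequences of subsets. -/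
abbrev AX (α : Type*) [DecidableEq α] : Type _ := (List (Finset α)) →₀ ℂ

/-- The multiplication of `A(X)`, extending `seqMul` bilinearly. -/
noncomputable def amul (x y : AX α) : AX α :=
  x.sum fun a ca => y.sum fun b cb => Finsupp.single (seqMul a b) (ca * cb)

/-- The unit `{X}` of `A(X)`. -/
noncomputable def oneA (X : Finset α) : AX α := Finsupp.single [X] 1

/-- `Î = {I, X \ I}` as an element of `A(X)`. -/
noncomputable def hatI (X I : Finset α) : AX α := Finsupp.single [I, X \ I] 1

/-- Product of a list of elements of `A(X)` (with unit `{X}`). -/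
noncomputable def aprod (X : Finset α) (l : List (AX α)) : AX α :=
  l.foldr amul (oneA X)

/-- A `ν`-chain associated to `S'`: a proper sequence all of whose proper initial
partial unions lie in `S'`. -/
def IsChainFor (X : Finset α) (S' : Set (Finset α)) (c : List (Finset α)) : Prop :=
  IsProperSeq X c ∧
    ∀ r : ℕ, 0 < r → r < c.length → ((c.take r).foldr (· ∪ ·) ∅) ∈ S'

lemma IsProperSeq.nodup {X : Finset α} {c : List (Finset α)}
    (h : IsProperSeq X c) : c.Nodup := by
  obtain ⟨-, hne, hpw, -⟩ := h
  refine List.Pairwise.imp_of_mem ?_ hpw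
  intro a b ha _ hab
  intro h'
  subst h'
  exact hne a ha (by simpa using hab)

/-- `U_S = Σ_ν Σ_{ν-chains for S'} (−1)^{ν−1} {J_1,…,J_ν}`, as a function of the
opposite paracell `S'`. -/
noncomputable def US [Fintype α] (X : Finset α) (S' : Set (Finset α)) : AX α :=
  Finsupp.ofSupportFinite
    (fun c => if IsChainFor X S' c then (-1 : ℂ) ^ (c.length - 1) else 0)
    (Set.Finite.subset
      (List.finite_length_le (Finset α) (Fintype.card (Finset α)))
      (by
        intro c hc
        have h : IsChainFor X S' c := by
          by_contra h
          simp [Function.mem_support, h] at hc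
        exact h.1.nodup.length_le_card))

/-- The underlying vector space of `A(A∪{1}) ⊗ A(B∪{1})`. -/
abbrev AX2 (α : Type*) [DecidableEq α] : Type _ :=
  (List (Finset α) × List (Finset α)) →₀ ℂ

/-- The multiplication of the tensor product algebra. -/
noncomputable def tmul (x y : AX2 α) : AX2 α :=
  x.sum fun a ca => y.sum fun b cb =>
    Finsupp.single (seqMul a.1 b.1, seqMul a.2 b.2) (ca * cb)

/-- The tensor `u ⊗ v` of two elements of `A(A∪{1})` and `A(B∪{1})`. -/
noncomputable def tens (u v : AX α) : AX2 α :=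
  u.sum fun a ca => v.sum fun b cb => Finsupp.single (a, b) (ca * cb)

/-- The pair `(c_A, c_B)` of traces of a sequence `c` on `A∪{1}` and `B∪{1}`,
with empty sets deleted. -/
noncomputable def facSeq (A1 B1 : Finset α) (c : List (Finset α)) :
    List (Finset α) × List (Finset α) :=
  ((c.map fun J => J ∩ A1).filter fun J => J ≠ ∅,
   (c.map fun J => J ∩ B1).filter fun J => J ≠ ∅)

/-- The factorization map `Fac : A(X) → A(A∪{1}) ⊗ A(B∪{1})`. -/
noncomputable def Fac (A1 B1 : Finset α) (x : AX α) : AX2 α :=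
  x.sum fun c cc => Finsupp.single (facSeq A1 B1 c) cc

/-- The paracell `(S‖1,A)` built from opposite paracells `S`, `S'` relative to
`X = A ∪ B ∪ {o}`. -/
def restCell (A : Finset α) (o : α) (S S' : Set (Finset α)) : Set (Finset α) :=
  {J | IsProperSubset (insert o A) J ∧
    ((J ⊆ A ∧ J ∈ S) ∨ (o ∈ J ∧ A \ J ∈ S'))}



/-! ### Auxiliary development for `hatI_mul_US` -/

section Aux

/-- Partial union of the first `r` blocks. -/
def pu (L : List (Finset α)) (r : ℕ) : Finset α := (L.take r).foldr (· ∪ ·) ∅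

/-- The `r`-th block (or `∅` out of range). -/
def blk (L : List (Finset α)) (r : ℕ) : Finset α := L.getD r ∅

lemma foldr_union_eq (l : List (Finset α)) (x : Finset α) :
    l.foldr (· ∪ ·) x = l.foldr (· ∪ ·) ∅ ∪ x := by
  induction l with
  | nil => simp
  | cons a t ih => simp [ih, Finset.union_assoc]

lemma foldrU_append (a b : List (Finset α)) :
    (a ++ b).foldr (· ∪ ·) ∅ = a.foldr (· ∪ ·) ∅ ∪ b.foldr (· ∪ ·) ∅ := by
  rw [List.foldr_append, foldr_union_eq]

lemma subset_foldrU {l : List (Finset α)} {J : Finset α} (h : J ∈ l) :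
    J ⊆ l.foldr (· ∪ ·) ∅ := by
  induction l with
  | nil => simp at h
  | cons a t ih =>
    rcases List.mem_cons.mp h with h | h
    · subst h; exact Finset.subset_union_left
    · exact (ih h).trans Finset.subset_union_right

lemma pu_zero (L : List (Finset α)) : pu L 0 = ∅ := rfl

lemma blk_mem {L : List (Finset α)} {r : ℕ} (h : r < L.length) :
    blk L r ∈ L := by
  have : blk L r = L[r] := List.getD_eq_getElem L ∅ h
  rw [this]
  exact List.getElem_mem h

lemma blk_out {L : List (Finset α)} {r : ℕ} (h : L.length ≤ r) : blk L r = ∅ :=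
  List.getD_eq_default L ∅ h

lemma pu_succ (L : List (Finset α)) (j : ℕ) : pu L (j + 1) = pu L j ∪ blk L j := by
  by_cases h : j < L.length
  · rw [pu, pu, List.take_succ, List.getElem?_eq_getElem h, foldrU_append]
    simp [blk, List.getD, List.getElem?_eq_getElem h]
  · push_neg at h
    rw [pu, pu, List.take_of_length_le h, List.take_of_length_le (by omega),
      blk_out h, Finset.union_empty]

lemma pu_mono (L : List (Finset α)) {a b : ℕ} (h : a ≤ b) : pu L a ⊆ pu L b := by
  induction b with
  | zero => simp_all
  | succ b ih =>
    rcases Nat.lt_or_ge a (b+1) with h' | h'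
    · exact (ih (by omega)).trans (by rw [pu_succ]; exact Finset.subset_union_left)
    · have : a = b + 1 := by omega
      subst this; rfl

lemma pu_subset_X {X : Finset α} {L : List (Finset α)} (hX : L.foldr (· ∪ ·) ∅ = X)
    (r : ℕ) : pu L r ⊆ X := by
  rw [← hX]
  conv_rhs => rw [← List.take_append_drop r L]
  rw [foldrU_append]
  exact Finset.subset_union_left

lemma pu_length {X : Finset α} {L : List (Finset α)} (hX : L.foldr (· ∪ ·) ∅ = X) :
    pu L L.length = X := by rw [pu, List.take_length, hX]

/-- Decomposition of a list at index `r`. -/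
lemma blk_decomp {L : List (Finset α)} {r : ℕ} (h : r < L.length) :
    L = L.take r ++ blk L r :: L.drop (r + 1) := by
  have hb : blk L r = L[r] := List.getD_eq_getElem L ∅ h
  rw [hb, ← List.drop_eq_getElem_cons h, List.take_append_drop]

lemma length_take_of_lt {L : List (Finset α)} {r : ℕ} (h : r ≤ L.length) :
    (L.take r).length = r := by simp [List.length_take]; omega


/-- Merge-eligibility at position `r` (0-based). -/
def mElig (I : Finset α) (L : List (Finset α)) (r : ℕ) : Prop :=
  r + 1 < L.length ∧ blk L r ⊆ I ∧ blk L (r + 1) ∩ I = ∅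

/-- Split-eligibility at position `r` (0-based). -/
def sElig (I : Finset α) (S' : Set (Finset α)) (L : List (Finset α)) (r : ℕ) : Prop :=
  r < L.length ∧ blk L r ∩ I ≠ ∅ ∧ blk L r \ I ≠ ∅ ∧ pu L r ∪ (blk L r ∩ I) ∈ S'

def elig (I : Finset α) (S' : Set (Finset α)) (L : List (Finset α)) (r : ℕ) : Prop :=
  mElig I L r ∨ sElig I S' L r

/-- Half-blocks: position `2j+1` carries `J_{j+1} ∩ I`, position `2j+2` carries
`J_{j+1} \ I`. -/
def halfB (I : Finset α) (L : List (Finset α)) (s : ℕ) : Finset α :=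
  if s = 0 then ∅
  else if s % 2 = 1 then blk L (s / 2) ∩ I else blk L (s / 2 - 1) \ I

/-- Partial unions of half-blocks. -/
def QB (I : Finset α) (L : List (Finset α)) : ℕ → Finset α
  | 0 => ∅
  | p + 1 => QB I L p ∪ halfB I L (p + 1)

lemma halfB_odd (I : Finset α) (L : List (Finset α)) (j : ℕ) :
    halfB I L (2 * j + 1) = blk L j ∩ I := by
  have h1 : (2 * j + 1) % 2 = 1 := by omega
  have h2 : (2 * j + 1) / 2 = j := by omega
  simp [halfB, h1, h2]

lemma halfB_even (I : Finset α) (L : List (Finset α)) (j : ℕ) :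
    halfB I L (2 * j + 2) = blk L j \ I := by
  have h1 : (2 * j + 2) % 2 = 0 := by omega
  have h2 : (2 * j + 2) / 2 - 1 = j := by omega
  simp [halfB, h1, h2]

lemma halfB_subset_of_odd {I : Finset α} {L : List (Finset α)} {s : ℕ}
    (h : s % 2 = 1) : halfB I L s ⊆ I := by
  have h0 : s ≠ 0 := by omega
  simp [halfB, h0, h]

lemma halfB_disj_of_even {I : Finset α} {L : List (Finset α)} {s : ℕ}
    (h : s % 2 = 0) : halfB I L s ∩ I = ∅ := by
  rcases Nat.eq_zero_or_pos s with h0 | h0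
  · simp [halfB, h0]
  · have h0' : s ≠ 0 := by omega
    have h1 : ¬ (s % 2 = 1) := by omega
    simp [halfB, h0', h1]

lemma halfB_out {I : Finset α} {L : List (Finset α)} {s : ℕ}
    (h : 2 * L.length < s) : halfB I L s = ∅ := by
  have h0 : s ≠ 0 := by omega
  by_cases h1 : s % 2 = 1
  · have : L.length ≤ s / 2 := by omega
    simp [halfB, h0, h1, blk_out this]
  · have : L.length ≤ s / 2 - 1 := by omega
    simp [halfB, h0, h1, blk_out this]

lemma QB_succ (I : Finset α) (L : List (Finset α)) (p : ℕ) :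
    QB I L (p + 1) = QB I L p ∪ halfB I L (p + 1) := rfl

lemma QB_even (I : Finset α) (L : List (Finset α)) (j : ℕ) :
    QB I L (2 * j) = pu L j := by
  induction j with
  | zero => rfl
  | succ j ih =>
    have h : 2 * (j + 1) = (2 * j + 1) + 1 := by ring
    rw [h, QB_succ, QB_succ, ih, halfB_odd]
    have h2 : 2 * j + 1 + 1 = 2 * j + 2 := rfl
    rw [h2, halfB_even, pu_succ]
    ext x
    by_cases hx : x ∈ I <;>
      simp [Finset.mem_union, Finset.mem_inter, Finset.mem_sdiff, hx] <;> tauto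

lemma QB_mono (I : Finset α) (L : List (Finset α)) {a b : ℕ} (h : a ≤ b) :
    QB I L a ⊆ QB I L b := by
  induction b with
  | zero => have : a = 0 := by omega
            subst this; exact Finset.Subset.refl _
  | succ b ih =>
    rcases Nat.lt_or_ge a (b + 1) with h' | h'
    · exact (ih (by omega)).trans (by rw [QB_succ]; exact Finset.subset_union_left)
    · have : a = b + 1 := by omega
      subst this; exact Finset.Subset.refl _

lemma QB_congr_empty {I : Finset α} {L : List (Finset α)} {a b : ℕ} (hab : a ≤ b)
    (h : ∀ u, a < u → u ≤ b → halfB I L u = ∅) : QB I L b = QB I L a := by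
  induction b with
  | zero => have : a = 0 := by omega
            subst this; rfl
  | succ b ih =>
    rcases Nat.lt_or_ge a (b + 1) with h' | h'
    · rw [QB_succ, ih (by omega) (fun u h1 h2 => h u h1 (by omega)),
        h (b + 1) h' (le_refl _), Finset.union_empty]
    · have : a = b + 1 := by omega
      subst this; rfl


/-- Core combinatorial lemma: any chain associated to a paracell `S'` containing
`I` admits an eligible (merge or split) position. -/
lemma exists_elig {X I : Finset α} {S' : Set (Finset α)}
    (hprop : ∀ A ∈ S', A ⊆ X ∧ A ≠ ∅ ∧ A ≠ X)
    (hclose : ∀ A ∈ S', ∀ B ∈ S', A ∩ B ∈ S' ∨ A ∪ B ∈ S')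
    (hI : I ∈ S') {L : List (Finset α)} (hc : IsChainFor X S' L) :
    ∃ r, elig I S' L r := by
  classical
  obtain ⟨⟨hnil, hne, hpw, hfold⟩, hpu⟩ := hc
  set n := L.length with hn
  set H : ℕ → Finset α := halfB I L with hH
  set Q : ℕ → Finset α := QB I L with hQ
  -- NE p : the next nonempty half-block above `p` (if any) is of complement type
  set NE : ℕ → Prop := fun p => ∀ s, p < s → s % 2 = 1 → H s ≠ ∅ →
    ∃ u, p < u ∧ u < s ∧ H u ≠ ∅ with hNE
  have main : ∀ p, Q p ∩ I ∈ S' → ((p % 2 = 0 ∧ H p ≠ ∅) ∨ NE p) →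
      ∃ r, elig I S' L r := by
    intro p
    induction p using Nat.strong_induction_on with
    | _ p IH =>
      intro hA hSD
      set p' := Nat.findGreatest (fun s => H s ≠ ∅) p with hp'
      have hp'le : p' ≤ p := Nat.findGreatest_le p
      have hup : ∀ u, p' < u → u ≤ p → H u = ∅ := by
        intro u h1 h2
        by_contra hcon
        exact (Nat.findGreatest_is_greatest h1 h2) hcon
      have hQpp' : Q p = Q p' := QB_congr_empty hp'le hup
      by_cases hp'0 : p' = 0
      · exfalso
        have hQ0 : Q p = Q 0 := by rw [hQpp', hp'0]
        have : (∅ : Finset α) ∈ S' := by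
          have : Q p ∩ I = ∅ := by rw [hQ0]; simp [hQ, QB]
          rwa [this] at hA
        exact (hprop _ this).2.1 rfl
      have hHp' : H p' ≠ ∅ := by
        have hne0 : ¬ (∀ m, 0 < m → m ≤ p → ¬ (fun s => H s ≠ ∅) m) := by
          intro hcon
          exact hp'0 (Nat.findGreatest_eq_zero_iff.mpr hcon)
        push_neg at hne0
        obtain ⟨m, _, hm2, hm3⟩ := hne0
        exact Nat.findGreatest_spec (P := fun s => H s ≠ ∅) hm2 (Finset.nonempty_iff_ne_empty.mp hm3)
      have hp'2n : p' ≤ 2 * n := by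
        by_contra hcon
        exact hHp' (halfB_out (by omega))
      have hA' : Q p' ∩ I ∈ S' := by rwa [hQpp'] at hA
      by_cases hpe : p' % 2 = 0
      · -- even: strip the top complement-type half-block and recurse
        have hps : p' - 1 + 1 = p' := by omega
        have hQs : Q p' = Q (p' - 1) ∪ H p' := by
          have h0 := QB_succ I L (p' - 1)
          rw [hps] at h0
          exact h0
        have h1 : Q p' ∩ I = Q (p' - 1) ∩ I := by
          rw [hQs, Finset.union_inter_distrib_right, halfB_disj_of_even hpe,
            Finset.union_empty]
        apply IH (p' - 1) (by omega) (h1 ▸ hA')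
        refine Or.inr ?_
        intro s hs hodd hsne
        have hsp' : s ≠ p' := by omega
        have hsgt : p' < s := by omega
        by_cases hsle : s ≤ p
        · exact absurd (hup s hsgt hsle) hsne
        · exact ⟨p', by omega, by omega, hHp'⟩
      · -- p' odd
        have hpo : p' % 2 = 1 := by omega
        have hNEp : NE p := by
          rcases hSD with ⟨hpe2, hHp⟩ | h
          · exfalso
            have : p' = p := le_antisymm hp'le (Nat.le_findGreatest (le_refl _) hHp)
            omega
          · exact h
        have hNE' : NE p' := by
          intro s hs hodd hsne
          by_cases hsle : s ≤ p
          · exact absurd (hup s hs hsle) hsne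
          · obtain ⟨u, hu1, hu2, hu3⟩ := hNEp s (by omega) hodd hsne
            exact ⟨u, by omega, hu2, hu3⟩
        -- the exit route
        have hexit : Q p' ∈ S' → ∃ r, elig I S' L r := by
          intro hQS
          obtain ⟨j, hj⟩ : ∃ j, p' = 2 * j + 1 := ⟨p' / 2, by omega⟩
          have hHj : H p' = blk L j ∩ I := by rw [hj]; exact halfB_odd I L j
          have hQj : Q p' = pu L j ∪ (blk L j ∩ I) := by
            have h0 := QB_succ I L (2 * j)
            rw [QB_even, halfB_odd] at h0
            rw [hj]; exact h0
          have hjn : j < n := by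
            by_contra hcon
            exact hHp' (by rw [hHj, blk_out (by omega)]; simp)
          by_cases hsp : blk L j \ I = ∅
          · -- block j is inside I
            have hsubI : blk L j ⊆ I := Finset.sdiff_eq_empty_iff_subset.mp hsp
            have hH1 : H (p' + 1) = ∅ := by
              have : p' + 1 = 2 * j + 2 := by omega
              rw [this]; exact (halfB_even I L j).trans hsp
            have hnext : H (p' + 2) = ∅ := by
              by_contra hne2
              obtain ⟨u, hu1, hu2, hu3⟩ := hNE' (p' + 2) (by omega) (by omega) hne2
              have : u = p' + 1 := by omega
              exact hu3 (this ▸ hH1)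
            by_cases hjn1 : j + 1 < n
            · refine ⟨j, Or.inl ⟨by omega, hsubI, ?_⟩⟩
              have h2 : halfB I L (2 * (j + 1) + 1) = ∅ := by
                rw [show 2 * (j + 1) + 1 = p' + 2 by omega]
                exact hnext
              rwa [halfB_odd] at h2
            · exfalso
              have hjn2 : j + 1 = n := by omega
              have hQtop : Q (2 * n) = Q p' := by
                apply QB_congr_empty (by omega)
                intro u h1 h2
                have hu1 : u = p' + 1 := by omega
                rw [hu1]; exact hH1
              have hX : Q (2 * n) = X := by
                rw [hQ, QB_even]; exact pu_length hfold
              exact (hprop _ hQS).2.2 (by rw [← hQtop, hX])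
          · -- split eligible at j
            refine ⟨j, Or.inr ⟨hjn, ?_, hsp, ?_⟩⟩
            · rw [← hHj]; exact hHp'
            · rw [← hQj]; exact hQS
        -- find the bottom `q` of the `⊆ I` run below p'
        have hex : ∃ q, ∀ s, q < s → s ≤ p' → H s ⊆ I := ⟨p', by omega⟩
        set q := Nat.find hex with hqd
        have hqspec : ∀ s, q < s → s ≤ p' → H s ⊆ I := Nat.find_spec hex
        have hqle : q ≤ p' := Nat.find_le (by omega)
        have hrun : Q p' = Q q ∪ (Q p' ∩ I) := by
          have hsub : ∀ d, q + d ≤ p' → Q (q + d) ⊆ Q q ∪ I := by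
            intro d
            induction d with
            | zero => intro _; exact Finset.subset_union_left
            | succ d ih =>
              intro hd
              have h1 : Q (q + d + 1) = Q (q + d) ∪ H (q + d + 1) := QB_succ I L _
              rw [show q + (d+1) = q + d + 1 by omega, h1]
              apply Finset.union_subset (ih (by omega))
              exact (hqspec (q + d + 1) (by omega) (by omega)).trans
                Finset.subset_union_right
          apply Finset.Subset.antisymm
          · intro x hx
            have hx2 := hsub (p' - q) (by omega) (by rwa [show q + (p' - q) = p' by omega])
            rcases Finset.mem_union.mp hx2 with h | h
            · exact Finset.mem_union_left _ h
            · exact Finset.mem_union_right _ (Finset.mem_inter.mpr ⟨hx, h⟩)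
          · apply Finset.union_subset (QB_mono I L hqle)
            exact Finset.inter_subset_left
        by_cases hq0 : q = 0
        · apply hexit
          have : Q p' = Q p' ∩ I := by
            rw [hrun, hq0]
            simp [hQ, QB]
          rw [this]; exact hA'
        · have hq1 : 1 ≤ q := by omega
          have hqnotI : ¬ (H q ⊆ I) := by
            have hmin := Nat.find_min hex (show q - 1 < q by omega)
            push_neg at hmin
            obtain ⟨s, hs1, hs2, hs3⟩ := hmin
            have : s = q := by
              by_contra hcon
              exact hs3 (hqspec s (by omega) hs2)
            exact this ▸ hs3
          have hqne : H q ≠ ∅ := fun h => hqnotI (by rw [h]; exact Finset.empty_subset I)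
          have hqe : q % 2 = 0 := by
            by_contra hodd
            exact hqnotI (halfB_subset_of_odd (by omega))
          have hqltp' : q < p' := by
            rcases Nat.lt_or_ge q p' with h | h
            · exact h
            · exfalso
              have : q = p' := by omega
              exact hqnotI (this ▸ halfB_subset_of_odd hpo)
          have hQqS : Q q ∈ S' := by
            obtain ⟨j, hj⟩ : ∃ j, q = 2 * j := ⟨q / 2, by omega⟩
            rw [hj, hQ, QB_even]
            exact hpu j (by omega) (by omega)
          rcases hclose _ hA' _ hQqS with hint | huni
          · have heq : (Q p' ∩ I) ∩ Q q = Q q ∩ I := by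
              have hss : Q q ⊆ Q p' := QB_mono I L (le_of_lt hqltp')
              apply Finset.Subset.antisymm
              · intro x hx
                simp only [Finset.mem_inter] at hx ⊢
                tauto
              · intro x hx
                simp only [Finset.mem_inter] at hx ⊢
                exact ⟨⟨hss hx.1, hx.2⟩, hx.1⟩
            rw [heq] at hint
            exact IH q (by omega) hint (Or.inl ⟨hqe, hqne⟩)
          · apply hexit
            rw [hrun, Finset.union_comm]
            exact huni
  apply main (2 * n)
  · have h1 : Q (2 * n) = X := by rw [hQ, QB_even]; exact pu_length hfold
    have h2 : Q (2 * n) ∩ I = I := by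
      rw [h1]; exact Finset.inter_eq_right.mpr (hprop _ hI).1
    rw [h2]; exact hI
  · refine Or.inr ?_
    intro s hs _ hne'
    exact absurd (halfB_out (by omega)) hne'


/-! ### Split and merge surgery on sequences -/

lemma inter_union_sdiff_eq (J I : Finset α) : (J ∩ I) ∪ (J \ I) = J := by
  ext x; simp; tauto

lemma inter_empty_mono {A B K : Finset α} (h : A ∩ B = ∅) (hK : K ⊆ B) :
    A ∩ K = ∅ := by
  have hsub : A ∩ K ⊆ A ∩ B := Finset.inter_subset_inter (Finset.Subset.refl _) hK
  rw [h] at hsub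
  exact Finset.subset_empty.mp hsub

lemma inter_empty_mono' {A B K : Finset α} (h : A ∩ B = ∅) (hK : K ⊆ A) :
    K ∩ B = ∅ := by
  have hsub : K ∩ B ⊆ A ∩ B := Finset.inter_subset_inter hK (Finset.Subset.refl _)
  rw [h] at hsub
  exact Finset.subset_empty.mp hsub

/-- Split block `r` into its `I`-part and its complement part. -/
def splitL (I : Finset α) (r : ℕ) (L : List (Finset α)) : List (Finset α) :=
  L.take r ++ (blk L r ∩ I) :: (blk L r \ I) :: L.drop (r + 1)

/-- Merge blocks `r` and `r+1`. -/
def mergeL (r : ℕ) (L : List (Finset α)) : List (Finset α) :=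
  L.take r ++ (blk L r ∪ blk L (r + 1)) :: L.drop (r + 2)

lemma length_splitL {I : Finset α} {r : ℕ} {L : List (Finset α)} (hr : r < L.length) :
    (splitL I r L).length = L.length + 1 := by
  simp [splitL, List.length_take, List.length_drop]
  omega

lemma length_mergeL {r : ℕ} {L : List (Finset α)} (hr : r + 1 < L.length) :
    (mergeL r L).length = L.length - 1 := by
  simp [mergeL, List.length_take, List.length_drop]
  omega

lemma drop_succ_blk {r : ℕ} {L : List (Finset α)} (h : r < L.length) :
    L.drop r = blk L r :: L.drop (r + 1) := by
  have hb : blk L r = L[r] := List.getD_eq_getElem L ∅ h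
  rw [hb]
  exact List.drop_eq_getElem_cons h

lemma blk_decomp2 {r : ℕ} {L : List (Finset α)} (h : r + 1 < L.length) :
    L = L.take r ++ blk L r :: blk L (r + 1) :: L.drop (r + 2) := by
  conv_lhs => rw [blk_decomp (show r < L.length by omega)]
  rw [drop_succ_blk h]

lemma pu_cons (J : Finset α) (v : List (Finset α)) (t : ℕ) :
    pu (J :: v) (t + 1) = J ∪ pu v t := by
  unfold pu
  rw [List.take_succ_cons]
  rfl

lemma pu_append_cons (u v : List (Finset α)) (J : Finset α) (t : ℕ) :
    pu (u ++ J :: v) (u.length + 1 + t) = u.foldr (· ∪ ·) ∅ ∪ (J ∪ pu v t) := by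
  unfold pu
  rw [show u.length + 1 + t = u.length + (t + 1) by omega, List.take_length_add_append,
    foldrU_append, List.take_succ_cons]
  rfl

lemma pu_splitL_le {I : Finset α} {r s : ℕ} {L : List (Finset α)} (hr : r < L.length)
    (hs : s ≤ r) : pu (splitL I r L) s = pu L s := by
  unfold pu splitL
  rw [List.take_append_of_le_length (by rw [length_take_of_lt hr.le]; exact hs),
    List.take_take]
  congr 2
  omega

lemma pu_split_family {I : Finset α} {r : ℕ} {L : List (Finset α)} (hr : r < L.length)
    (t : ℕ) :
    pu (splitL I r L) (r + 1 + t) =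
      (L.take r).foldr (· ∪ ·) ∅ ∪ ((blk L r ∩ I) ∪ pu ((blk L r \ I) :: L.drop (r + 1)) t) := by
  unfold splitL
  rw [show r + 1 + t = (L.take r).length + 1 + t by rw [length_take_of_lt hr.le]]
  exact pu_append_cons _ _ _ _

lemma pu_L_family {r : ℕ} {L : List (Finset α)} (hr : r < L.length) (t : ℕ) :
    pu L (r + 1 + t) =
      (L.take r).foldr (· ∪ ·) ∅ ∪ (blk L r ∪ pu (L.drop (r + 1)) t) := by
  conv_lhs => rw [blk_decomp hr]
  rw [show r + 1 + t = (L.take r).length + 1 + t by rw [length_take_of_lt hr.le]]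
  exact pu_append_cons _ _ _ _

lemma pu_splitL_succ {I : Finset α} {r : ℕ} {L : List (Finset α)} (hr : r < L.length) :
    pu (splitL I r L) (r + 1) = pu L r ∪ (blk L r ∩ I) := by
  have h := pu_split_family (I := I) hr 0
  rw [show r + 1 + 0 = r + 1 by omega] at h
  rw [h]
  have h2 : pu ((blk L r \ I) :: L.drop (r + 1)) 0 = ∅ := rfl
  rw [h2, Finset.union_empty]
  rfl

lemma pu_splitL_ge {I : Finset α} {r s : ℕ} {L : List (Finset α)} (hr : r < L.length)
    (hs : r + 2 ≤ s) : pu (splitL I r L) s = pu L (s - 1) := by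
  have h1 := pu_split_family (I := I) hr (s - r - 1)
  rw [show r + 1 + (s - r - 1) = s by omega] at h1
  rw [show s - r - 1 = (s - r - 2) + 1 by omega, pu_cons] at h1
  have h2 := pu_L_family hr (s - r - 2)
  rw [show r + 1 + (s - r - 2) = s - 1 by omega] at h2
  rw [h1, h2, ← Finset.union_assoc (blk L r ∩ I), inter_union_sdiff_eq]

lemma pu_mergeL_le {r s : ℕ} {L : List (Finset α)} (hr : r + 1 < L.length)
    (hs : s ≤ r) : pu (mergeL r L) s = pu L s := by
  have hrl : (L.take r).length = r := length_take_of_lt (by omega)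
  unfold pu mergeL
  rw [List.take_append_of_le_length (by rw [hrl]; exact hs), List.take_take]
  congr 2
  omega

lemma pu_mergeL_ge {r s : ℕ} {L : List (Finset α)} (hr : r + 1 < L.length)
    (hs : r + 1 ≤ s) : pu (mergeL r L) s = pu L (s + 1) := by
  have hrl : (L.take r).length = r := length_take_of_lt (by omega)
  have h1 : pu (mergeL r L) s =
      (L.take r).foldr (· ∪ ·) ∅ ∪ ((blk L r ∪ blk L (r + 1)) ∪ pu (L.drop (r + 2)) (s - r - 1)) := by
    unfold mergeL
    have h0 := pu_append_cons (L.take r) (L.drop (r + 2)) (blk L r ∪ blk L (r + 1)) (s - r - 1)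
    rw [hrl, show r + 1 + (s - r - 1) = s by omega] at h0
    exact h0
  have h2b := pu_cons (blk L (r + 1)) (L.drop (r + 2)) (s - r - 1)
  rw [show s - r - 1 + 1 = s - r by omega] at h2b
  have h2 : pu L (s + 1) =
      (L.take r).foldr (· ∪ ·) ∅ ∪ (blk L r ∪ (blk L (r + 1) ∪ pu (L.drop (r + 2)) (s - r - 1))) := by
    have h0 := pu_append_cons (L.take r) (blk L (r + 1) :: L.drop (r + 2)) (blk L r) (s - r)
    rw [hrl, show r + 1 + (s - r) = s + 1 by omega, h2b] at h0
    conv_lhs => rw [blk_decomp2 hr]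
    exact h0
  rw [h1, h2, Finset.union_assoc]

lemma blk_splitL_lt {I : Finset α} {r s : ℕ} {L : List (Finset α)} (hr : r < L.length)
    (hs : s < r) : blk (splitL I r L) s = blk L s := by
  unfold blk splitL
  have h1 : s < (L.take r).length := by rw [length_take_of_lt hr.le]; exact hs
  rw [List.getD_append _ _ _ _ h1, List.getD_eq_getElem _ _ h1, List.getElem_take,
    List.getD_eq_getElem _ _ (by omega : s < L.length)]

lemma blk_splitL_r {I : Finset α} {r : ℕ} {L : List (Finset α)} (hr : r < L.length) :
    blk (splitL I r L) r = blk L r ∩ I := by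
  unfold blk splitL
  rw [List.getD_append_right _ _ _ _ (by rw [length_take_of_lt hr.le]),
    length_take_of_lt hr.le]
  simp [blk, List.getD]

lemma blk_splitL_r1 {I : Finset α} {r : ℕ} {L : List (Finset α)} (hr : r < L.length) :
    blk (splitL I r L) (r + 1) = blk L r \ I := by
  unfold blk splitL
  rw [List.getD_append_right _ _ _ _ (by rw [length_take_of_lt hr.le]; omega),
    length_take_of_lt hr.le]
  simp [blk, List.getD]

lemma blk_mergeL_lt {r s : ℕ} {L : List (Finset α)} (hr : r + 1 < L.length)
    (hs : s < r) : blk (mergeL r L) s = blk L s := by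
  unfold blk mergeL
  have h1 : s < (L.take r).length := by rw [length_take_of_lt (by omega : r ≤ L.length)]; exact hs
  rw [List.getD_append _ _ _ _ h1, List.getD_eq_getElem _ _ h1, List.getElem_take,
    List.getD_eq_getElem _ _ (by omega : s < L.length)]

lemma blk_mergeL_r {r : ℕ} {L : List (Finset α)} (hr : r + 1 < L.length) :
    blk (mergeL r L) r = blk L r ∪ blk L (r + 1) := by
  unfold blk mergeL
  rw [List.getD_append_right _ _ _ _ (by rw [length_take_of_lt (by omega : r ≤ L.length)]),
    length_take_of_lt (by omega : r ≤ L.length)]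
  simp [blk, List.getD]

lemma take_splitL {I : Finset α} {r : ℕ} {L : List (Finset α)} (hr : r < L.length) :
    (splitL I r L).take r = L.take r := by
  unfold splitL
  rw [List.take_left' (length_take_of_lt hr.le)]

lemma take_mergeL {r : ℕ} {L : List (Finset α)} (hr : r + 1 < L.length) :
    (mergeL r L).take r = L.take r := by
  unfold mergeL
  rw [List.take_left' (length_take_of_lt (by omega : r ≤ L.length))]

lemma mergeL_splitL {I : Finset α} {r : ℕ} {L : List (Finset α)} (hr : r < L.length) :
    mergeL r (splitL I r L) = L := by
  unfold mergeL
  rw [take_splitL hr, blk_splitL_r hr, blk_splitL_r1 hr, inter_union_sdiff_eq]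
  have hdrop : (splitL I r L).drop (r + 2) = L.drop (r + 1) := by
    unfold splitL
    rw [show r + 2 = (L.take r).length + 2 by rw [length_take_of_lt hr.le],
      List.drop_length_add_append]
    rfl
  rw [hdrop]
  exact (blk_decomp hr).symm

lemma splitL_mergeL {I : Finset α} {r : ℕ} {L : List (Finset α)} (hr : r + 1 < L.length)
    (hsub : blk L r ⊆ I) (hdisj : blk L (r + 1) ∩ I = ∅) :
    splitL I r (mergeL r L) = L := by
  unfold splitL
  rw [take_mergeL hr, blk_mergeL_r hr]
  have e1 : (blk L r ∪ blk L (r + 1)) ∩ I = blk L r := by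
    have h := fun x (hx : x ∈ blk L (r+1)) (hxi : x ∈ I) =>
      (Finset.eq_empty_iff_forall_notMem.mp hdisj x) (Finset.mem_inter.mpr ⟨hx, hxi⟩)
    ext x
    simp only [Finset.mem_inter, Finset.mem_union]
    constructor
    · rintro ⟨hx | hx, hxi⟩
      · exact hx
      · exact absurd hxi (h x hx)
    · intro hx
      exact ⟨Or.inl hx, hsub hx⟩
  have e2 : (blk L r ∪ blk L (r + 1)) \ I = blk L (r + 1) := by
    have h := fun x (hx : x ∈ blk L (r+1)) (hxi : x ∈ I) =>
      (Finset.eq_empty_iff_forall_notMem.mp hdisj x) (Finset.mem_inter.mpr ⟨hx, hxi⟩)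
    ext x
    simp only [Finset.mem_sdiff, Finset.mem_union]
    constructor
    · rintro ⟨hx | hx, hxi⟩
      · exact absurd (hsub hx) hxi
      · exact hx
    · intro hx
      exact ⟨Or.inr hx, h x hx⟩
  rw [e1, e2]
  have hdrop : (mergeL r L).drop (r + 1) = L.drop (r + 2) := by
    unfold mergeL
    rw [show r + 1 = (L.take r).length + 1 by rw [length_take_of_lt (by omega : r ≤ L.length)],
      List.drop_length_add_append]
    rfl
  rw [hdrop]
  exact (blk_decomp2 hr).symm

/-! ### Chain preservation under split and merge -/

lemma chain_splitL {X I : Finset α} {S' : Set (Finset α)} {L : List (Finset α)}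
    (hc : IsChainFor X S' L) {r : ℕ} (hr : r < L.length)
    (h1 : blk L r ∩ I ≠ ∅) (h2 : blk L r \ I ≠ ∅)
    (h3 : pu L r ∪ (blk L r ∩ I) ∈ S') : IsChainFor X S' (splitL I r L) := by
  obtain ⟨⟨hnil, hne, hpw, hfold⟩, hpuS⟩ := hc
  have hdec := blk_decomp hr
  refine ⟨⟨?_, ?_, ?_, ?_⟩, ?_⟩
  · simp [splitL]
  · intro J hJ
    simp only [splitL, List.mem_append, List.mem_cons] at hJ
    rcases hJ with hJ | hJ | hJ | hJ
    · exact hne _ (List.mem_of_mem_take hJ)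
    · exact hJ ▸ h1
    · exact hJ ▸ h2
    · exact hne _ (List.mem_of_mem_drop hJ)
  · have hpw' : List.Pairwise (fun A B => A ∩ B = ∅)
        (L.take r ++ blk L r :: L.drop (r + 1)) := hdec ▸ hpw
    rw [List.pairwise_append] at hpw'
    obtain ⟨pwt, pwc, cross⟩ := hpw'
    rw [List.pairwise_cons] at pwc
    obtain ⟨hJd, pwd⟩ := pwc
    unfold splitL
    rw [List.pairwise_append]
    refine ⟨pwt, ?_, ?_⟩
    · rw [List.pairwise_cons]
      constructor
      · intro B hB
        rcases List.mem_cons.mp hB with hB | hB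
        · subst hB
          ext x; simp
        · exact inter_empty_mono' (hJd B hB) Finset.inter_subset_left
      · rw [List.pairwise_cons]
        refine ⟨fun B hB => inter_empty_mono' (hJd B hB) (Finset.sdiff_subset), pwd⟩
    · intro a ha b hb
      have hcross := fun b hb => cross a ha b hb
      rcases List.mem_cons.mp hb with hb | hb
      · subst hb
        exact inter_empty_mono (hcross _ List.mem_cons_self) Finset.inter_subset_left
      rcases List.mem_cons.mp hb with hb | hb
      · subst hb
        exact inter_empty_mono (hcross _ List.mem_cons_self) (Finset.sdiff_subset)
      · exact hcross b (List.mem_cons_of_mem _ hb)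
  · have hx : (L.take r ++ blk L r :: L.drop (r + 1)).foldr (· ∪ ·) ∅ = X := by
      rw [← hdec]; exact hfold
    rw [foldrU_append] at hx
    unfold splitL
    rw [foldrU_append]
    rw [← hx]
    simp only [List.foldr_cons]
    ext x
    simp only [Finset.mem_union, Finset.mem_inter, Finset.mem_sdiff]
    tauto
  · intro s hs0 hslen
    rw [length_splitL hr] at hslen
    show pu (splitL I r L) s ∈ S'
    rcases Nat.lt_or_ge s (r + 1) with hcase | hcase
    · rw [pu_splitL_le hr (by omega)]
      exact hpuS s hs0 (by omega)
    rcases Nat.eq_or_lt_of_le hcase with hcase2 | hcase2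
    · rw [← hcase2, pu_splitL_succ hr]
      exact h3
    · rw [pu_splitL_ge hr (by omega)]
      exact hpuS (s - 1) (by omega) (by omega)

lemma chain_mergeL {X I : Finset α} {S' : Set (Finset α)} {L : List (Finset α)}
    (hc : IsChainFor X S' L) {r : ℕ} (hr : r + 1 < L.length) :
    IsChainFor X S' (mergeL r L) := by
  obtain ⟨⟨hnil, hne, hpw, hfold⟩, hpuS⟩ := hc
  have hdec := blk_decomp2 hr
  refine ⟨⟨?_, ?_, ?_, ?_⟩, ?_⟩
  · simp [mergeL]
  · intro J hJ
    simp only [mergeL, List.mem_append, List.mem_cons] at hJ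
    rcases hJ with hJ | hJ | hJ
    · exact hne _ (List.mem_of_mem_take hJ)
    · subst hJ
      intro hcon
      rw [Finset.union_eq_empty] at hcon
      exact hne _ (blk_mem (by omega)) hcon.1
    · exact hne _ (List.mem_of_mem_drop hJ)
  · have hpw' : List.Pairwise (fun A B => A ∩ B = ∅)
        (L.take r ++ blk L r :: blk L (r + 1) :: L.drop (r + 2)) := hdec ▸ hpw
    rw [List.pairwise_append] at hpw'
    obtain ⟨pwt, pwc, cross⟩ := hpw'
    rw [List.pairwise_cons] at pwc
    obtain ⟨hJ1, pwc2⟩ := pwc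
    rw [List.pairwise_cons] at pwc2
    obtain ⟨hJ2, pwd⟩ := pwc2
    unfold mergeL
    rw [List.pairwise_append]
    refine ⟨pwt, ?_, ?_⟩
    · rw [List.pairwise_cons]
      refine ⟨?_, pwd⟩
      intro B hB
      have e1 : blk L r ∩ B = ∅ := hJ1 B (List.mem_cons_of_mem _ hB)
      have e2 : blk L (r + 1) ∩ B = ∅ := hJ2 B hB
      rw [Finset.union_inter_distrib_right, e1, e2, Finset.union_empty]
    · intro a ha b hb
      rcases List.mem_cons.mp hb with hb | hb
      · subst hb
        have e1 : a ∩ blk L r = ∅ := cross a ha _ List.mem_cons_self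
        have e2 : a ∩ blk L (r + 1) = ∅ :=
          cross a ha _ (List.mem_cons_of_mem _ List.mem_cons_self)
        rw [Finset.inter_union_distrib_left, e1, e2, Finset.union_empty]
      · exact cross a ha b (List.mem_cons_of_mem _ (List.mem_cons_of_mem _ hb))
  · have hx : (L.take r ++ blk L r :: blk L (r + 1) :: L.drop (r + 2)).foldr (· ∪ ·) ∅ = X := by
      rw [← hdec]; exact hfold
    rw [foldrU_append] at hx
    unfold mergeL
    rw [foldrU_append]
    rw [← hx]
    simp only [List.foldr_cons]
    ext x
    simp only [Finset.mem_union]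
    tauto
  · intro s hs0 hslen
    rw [length_mergeL hr] at hslen
    show pu (mergeL r L) s ∈ S'
    rcases Nat.lt_or_ge s (r + 1) with hcase | hcase
    · rw [pu_mergeL_le hr (by omega)]
      exact hpuS s hs0 (by omega)
    · rw [pu_mergeL_ge hr (by omega)]
      exact hpuS (s + 1) (by omega) (by omega)

/-! ### `seqMul` against `[I, X \ I]` is preserved by split and merge -/

lemma seqMul_append_right (a u v : List (Finset α)) :
    seqMul a (u ++ v) = seqMul a u ++ seqMul a v := by
  simp [seqMul, List.filter_append]

lemma seqMul_cons_right (a : List (Finset α)) (J : Finset α) (t : List (Finset α)) :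
    seqMul a (J :: t) = ((a.map fun A => A ∩ J).filter fun K => K ≠ ∅) ++ seqMul a t := by
  simp [seqMul, List.filter_append]

lemma seqMul_hat_split {X I J : Finset α} (hJX : J ⊆ X)
    (h1 : J ∩ I ≠ ∅) (h2 : J \ I ≠ ∅) (t : List (Finset α)) :
    seqMul [I, X \ I] ((J ∩ I) :: (J \ I) :: t) = seqMul [I, X \ I] (J :: t) := by
  rw [seqMul_cons_right, seqMul_cons_right, seqMul_cons_right]
  have e1 : I ∩ (J ∩ I) = J ∩ I := by ext x; simp; try tauto
  have e2 : (X \ I) ∩ (J ∩ I) = ∅ := by ext x; simp; try tauto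
  have e3 : I ∩ (J \ I) = ∅ := by ext x; simp; try tauto
  have e4 : (X \ I) ∩ (J \ I) = J \ I := by
    ext x
    simp only [Finset.mem_inter, Finset.mem_sdiff]
    constructor
    · rintro ⟨⟨-, hxn⟩, hxJ, -⟩
      exact ⟨hxJ, hxn⟩
    · rintro ⟨hxJ, hxn⟩
      exact ⟨⟨hJX hxJ, hxn⟩, hxJ, hxn⟩
  have e5 : I ∩ J = J ∩ I := Finset.inter_comm I J
  have e6 : (X \ I) ∩ J = J \ I := by
    ext x
    simp only [Finset.mem_inter, Finset.mem_sdiff]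
    constructor
    · rintro ⟨⟨-, hxn⟩, hxJ⟩
      exact ⟨hxJ, hxn⟩
    · rintro ⟨hxJ, hxn⟩
      exact ⟨⟨hJX hxJ, hxn⟩, hxJ⟩
  simp only [List.map_cons, List.map_nil, e1, e2, e3, e4, e5, e6]
  simp [List.filter, h1, h2, List.append_assoc]

lemma seqMul_hat_merge {X I J J' : Finset α} (hJX : J ⊆ X) (hJ'X : J' ⊆ X)
    (hJI : J ⊆ I) (hJ'I : J' ∩ I = ∅) (hJne : J ≠ ∅) (hJ'ne : J' ≠ ∅)
    (t : List (Finset α)) :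
    seqMul [I, X \ I] ((J ∪ J') :: t) = seqMul [I, X \ I] (J :: J' :: t) := by
  rw [seqMul_cons_right, seqMul_cons_right, seqMul_cons_right]
  have hd := fun x (hx : x ∈ J') (hxi : x ∈ I) =>
    (Finset.eq_empty_iff_forall_notMem.mp hJ'I x) (Finset.mem_inter.mpr ⟨hx, hxi⟩)
  have e1 : I ∩ (J ∪ J') = J := by
    ext x
    simp only [Finset.mem_inter, Finset.mem_union]
    constructor
    · rintro ⟨hxi, hx | hx⟩
      · exact hx
      · exact absurd hxi (hd x hx)
    · intro hx
      exact ⟨hJI hx, Or.inl hx⟩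
  have e2 : (X \ I) ∩ (J ∪ J') = J' := by
    ext x
    simp only [Finset.mem_inter, Finset.mem_sdiff, Finset.mem_union]
    constructor
    · rintro ⟨⟨-, hxn⟩, hx | hx⟩
      · exact absurd (hJI hx) hxn
      · exact hx
    · intro hx
      exact ⟨⟨hJ'X hx, hd x hx⟩, Or.inr hx⟩
  have e3 : I ∩ J = J := by
    ext x
    simp only [Finset.mem_inter]
    exact ⟨fun h => h.2, fun h => ⟨hJI h, h⟩⟩
  have e4 : (X \ I) ∩ J = ∅ := by
    ext x
    simp only [Finset.mem_inter, Finset.mem_sdiff, Finset.notMem_empty, iff_false]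
    rintro ⟨⟨-, hxn⟩, hx⟩
    exact hxn (hJI hx)
  have e5 : I ∩ J' = ∅ := by
    ext x
    simp only [Finset.mem_inter, Finset.notMem_empty, iff_false]
    rintro ⟨hxi, hx⟩
    exact hd x hx hxi
  have e6 : (X \ I) ∩ J' = J' := by
    ext x
    simp only [Finset.mem_inter, Finset.mem_sdiff]
    constructor
    · rintro ⟨-, hx⟩
      exact hx
    · intro hx
      exact ⟨⟨hJ'X hx, hd x hx⟩, hx⟩
  simp only [List.map_cons, List.map_nil, e1, e2, e3, e4, e5, e6]
  simp [List.filter, hJne, hJ'ne]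

/-! ### The involution on chains -/

lemma chain_blk_subset {X : Finset α} {S' : Set (Finset α)} {L : List (Finset α)}
    (hc : IsChainFor X S' L) {r : ℕ} (hr : r < L.length) : blk L r ⊆ X := by
  have h := subset_foldrU (blk_mem hr)
  rwa [hc.1.2.2.2] at h

lemma chain_blk_ne {X : Finset α} {S' : Set (Finset α)} {L : List (Finset α)}
    (hc : IsChainFor X S' L) {r : ℕ} (hr : r < L.length) : blk L r ≠ ∅ :=
  hc.1.2.1 _ (blk_mem hr)

lemma not_mElig_of_sElig {I : Finset α} {S' : Set (Finset α)} {L : List (Finset α)}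
    {r : ℕ} (hs : sElig I S' L r) : ¬ mElig I L r := by
  intro hm
  exact hs.2.2.1 (Finset.sdiff_eq_empty_iff_subset.mpr hm.2.1)

lemma elig_splitL_iff {I : Finset α} {S' : Set (Finset α)} {L : List (Finset α)}
    {r s : ℕ} (hr : r < L.length) (hs : s < r) :
    elig I S' (splitL I r L) s ↔ elig I S' L s := by
  have hb : blk (splitL I r L) s = blk L s := blk_splitL_lt hr hs
  have hp : pu (splitL I r L) s = pu L s := pu_splitL_le hr (by omega)
  have hb1 : blk (splitL I r L) (s + 1) ∩ I = blk L (s + 1) ∩ I := by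
    rcases Nat.lt_or_ge (s + 1) r with h | h
    · rw [blk_splitL_lt hr h]
    · have he : s + 1 = r := by omega
      rw [he, blk_splitL_r hr, Finset.inter_assoc, Finset.inter_self]
  have hlen := length_splitL (I := I) hr
  constructor
  · rintro (⟨h1, h2, h3⟩ | ⟨h1, h2, h3, h4⟩)
    · exact Or.inl ⟨by omega, hb ▸ h2, hb1 ▸ h3⟩
    · exact Or.inr ⟨by omega, hb ▸ h2, hb ▸ h3, by rw [← hb, ← hp]; exact h4⟩
  · rintro (⟨h1, h2, h3⟩ | ⟨h1, h2, h3, h4⟩)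
    · exact Or.inl ⟨by omega, hb.symm ▸ h2, hb1.symm ▸ h3⟩
    · exact Or.inr ⟨by omega, hb.symm ▸ h2, hb.symm ▸ h3, by rw [hb, hp]; exact h4⟩

lemma elig_mergeL_iff {I : Finset α} {S' : Set (Finset α)} {L : List (Finset α)}
    {r s : ℕ} (hr : r + 1 < L.length) (hs : s < r) (hm : mElig I L r)
    (hrne : blk L r ≠ ∅) :
    elig I S' (mergeL r L) s ↔ elig I S' L s := by
  have hb : blk (mergeL r L) s = blk L s := blk_mergeL_lt hr hs
  have hp : pu (mergeL r L) s = pu L s := pu_mergeL_le hr (by omega)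
  have hlen := length_mergeL hr
  have hJI : blk L r ∩ I = blk L r := Finset.inter_eq_left.mpr hm.2.1
  rcases Nat.lt_or_ge (s + 1) r with hcase | hcase
  · have hb1 : blk (mergeL r L) (s + 1) = blk L (s + 1) := blk_mergeL_lt hr hcase
    constructor
    · rintro (⟨h1, h2, h3⟩ | ⟨h1, h2, h3, h4⟩)
      · exact Or.inl ⟨by omega, hb ▸ h2, hb1 ▸ h3⟩
      · exact Or.inr ⟨by omega, hb ▸ h2, hb ▸ h3, by rw [← hb, ← hp]; exact h4⟩
    · rintro (⟨h1, h2, h3⟩ | ⟨h1, h2, h3, h4⟩)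
      · exact Or.inl ⟨by omega, hb.symm ▸ h2, hb1.symm ▸ h3⟩
      · exact Or.inr ⟨by omega, hb.symm ▸ h2, hb.symm ▸ h3, by rw [hb, hp]; exact h4⟩
  · have he : s + 1 = r := by omega
    have hne1 : blk (mergeL r L) (s + 1) ∩ I ≠ ∅ := by
      rw [he, blk_mergeL_r hr, Finset.union_inter_distrib_right, hJI]
      intro hcon
      rw [Finset.union_eq_empty] at hcon
      exact hrne hcon.1
    have hne2 : blk L (s + 1) ∩ I ≠ ∅ := by
      rw [he, hJI]; exact hrne
    constructor
    · rintro (⟨h1, h2, h3⟩ | ⟨h1, h2, h3, h4⟩)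
      · exact absurd h3 hne1
      · exact Or.inr ⟨by omega, hb ▸ h2, hb ▸ h3, by rw [← hb, ← hp]; exact h4⟩
    · rintro (⟨h1, h2, h3⟩ | ⟨h1, h2, h3, h4⟩)
      · exact absurd h3 hne2
      · exact Or.inr ⟨by omega, hb.symm ▸ h2, hb.symm ▸ h3, by rw [hb, hp]; exact h4⟩

lemma mElig_splitL {I : Finset α} {L : List (Finset α)} {r : ℕ} (hr : r < L.length) :
    mElig I (splitL I r L) r := by
  refine ⟨by rw [length_splitL hr]; omega, ?_, ?_⟩
  · rw [blk_splitL_r hr]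
    exact Finset.inter_subset_right
  · rw [blk_splitL_r1 hr]
    exact Finset.sdiff_inter_self I (blk L r)

lemma sElig_mergeL {X I : Finset α} {S' : Set (Finset α)} {L : List (Finset α)}
    (hc : IsChainFor X S' L) {r : ℕ} (hr : r + 1 < L.length) (hm : mElig I L r) :
    sElig I S' (mergeL r L) r := by
  have hJne : blk L r ≠ ∅ := chain_blk_ne hc (by omega)
  have hJ'ne : blk L (r + 1) ≠ ∅ := chain_blk_ne hc hr
  have hd := fun x (hx : x ∈ blk L (r + 1)) (hxi : x ∈ I) =>
    (Finset.eq_empty_iff_forall_notMem.mp hm.2.2 x) (Finset.mem_inter.mpr ⟨hx, hxi⟩)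
  have e1 : (blk L r ∪ blk L (r + 1)) ∩ I = blk L r := by
    ext x
    simp only [Finset.mem_inter, Finset.mem_union]
    constructor
    · rintro ⟨hx | hx, hxi⟩
      · exact hx
      · exact absurd hxi (hd x hx)
    · intro hx
      exact ⟨Or.inl hx, hm.2.1 hx⟩
  have e2 : blk L (r + 1) ⊆ (blk L r ∪ blk L (r + 1)) \ I := by
    intro x hx
    exact Finset.mem_sdiff.mpr ⟨Finset.mem_union_right _ hx, hd x hx⟩
  refine ⟨by rw [length_mergeL hr]; omega, ?_, ?_, ?_⟩
  · rw [blk_mergeL_r hr, e1]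
    exact hJne
  · rw [blk_mergeL_r hr]
    intro hcon
    rw [hcon, Finset.subset_empty] at e2
    exact hJ'ne e2
  · rw [blk_mergeL_r hr, e1, pu_mergeL_le hr (le_refl r), ← pu_succ]
    exact hc.2 (r + 1) (by omega) hr

/-- The sign-reversing involution on chains. -/
noncomputable def iot (I : Finset α) (S' : Set (Finset α)) (L : List (Finset α)) :
    List (Finset α) :=
  if h : ∃ r, elig I S' L r then
    if mElig I L (Nat.find h) then mergeL (Nat.find h) L
    else splitL I (Nat.find h) L
  else L

lemma iot_spec {X I : Finset α} {S' : Set (Finset α)}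
    (hprop : ∀ A ∈ S', A ⊆ X ∧ A ≠ ∅ ∧ A ≠ X)
    (hclose : ∀ A ∈ S', ∀ B ∈ S', A ∩ B ∈ S' ∨ A ∪ B ∈ S')
    (hI : I ∈ S') {L : List (Finset α)} (hc : IsChainFor X S' L) :
    IsChainFor X S' (iot I S' L) ∧
      seqMul [I, X \ I] (iot I S' L) = seqMul [I, X \ I] L ∧
      iot I S' (iot I S' L) = L ∧
      ((iot I S' L).length = L.length + 1 ∨ L.length = (iot I S' L).length + 1) := by
  classical
  have hex : ∃ r, elig I S' L r := exists_elig hprop hclose hI hc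
  set r := Nat.find hex with hrdef
  have helig : elig I S' L r := Nat.find_spec hex
  have hmin : ∀ s, s < r → ¬ elig I S' L s := fun s hs => Nat.find_min hex hs
  by_cases hm : mElig I L r
  · -- merge case
    have hr1 : r + 1 < L.length := hm.1
    have hio : iot I S' L = mergeL r L := by
      unfold iot
      rw [dif_pos hex, ← hrdef, if_pos hm]
    have hJne : blk L r ≠ ∅ := chain_blk_ne hc (by omega)
    have hJ'ne : blk L (r + 1) ≠ ∅ := chain_blk_ne hc hr1
    have hchain' : IsChainFor X S' (mergeL r L) := chain_mergeL (I := I) hc hr1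
    have hs' : sElig I S' (mergeL r L) r := sElig_mergeL hc hr1 hm
    have hnm' : ¬ mElig I (mergeL r L) r := not_mElig_of_sElig hs'
    have hex' : ∃ s, elig I S' (mergeL r L) s := ⟨r, Or.inr hs'⟩
    have hfind' : Nat.find hex' = r := by
      rw [Nat.find_eq_iff]
      refine ⟨Or.inr hs', fun k hk => ?_⟩
      rw [elig_mergeL_iff hr1 hk hm hJne]
      exact hmin k hk
    have hio2 : iot I S' (mergeL r L) = splitL I r (mergeL r L) := by
      unfold iot
      rw [dif_pos hex', hfind', if_neg hnm']
    have hinv : splitL I r (mergeL r L) = L := splitL_mergeL hr1 hm.2.1 hm.2.2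
    have hseq : seqMul [I, X \ I] (mergeL r L) = seqMul [I, X \ I] L := by
      have hJX : blk L r ⊆ X := chain_blk_subset hc (by omega)
      have hJ'X : blk L (r + 1) ⊆ X := chain_blk_subset hc hr1
      conv_rhs => rw [blk_decomp2 hr1]
      unfold mergeL
      rw [seqMul_append_right, seqMul_append_right]
      rw [seqMul_hat_merge hJX hJ'X hm.2.1 hm.2.2 hJne hJ'ne]
    refine ⟨hio ▸ hchain', hio ▸ hseq, ?_, ?_⟩
    · rw [hio, hio2, hinv]
    · rw [hio, length_mergeL hr1]
      omega
  · -- split case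
    have hs : sElig I S' L r := helig.resolve_left hm
    have hr : r < L.length := hs.1
    have hio : iot I S' L = splitL I r L := by
      unfold iot
      rw [dif_pos hex, ← hrdef, if_neg hm]
    have hchain' : IsChainFor X S' (splitL I r L) :=
      chain_splitL hc hr hs.2.1 hs.2.2.1 hs.2.2.2
    have hm' : mElig I (splitL I r L) r := mElig_splitL hr
    have hex' : ∃ s, elig I S' (splitL I r L) s := ⟨r, Or.inl hm'⟩
    have hfind' : Nat.find hex' = r := by
      rw [Nat.find_eq_iff]
      refine ⟨Or.inl hm', fun k hk => ?_⟩
      rw [elig_splitL_iff hr hk]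
      exact hmin k hk
    have hio2 : iot I S' (splitL I r L) = mergeL r (splitL I r L) := by
      unfold iot
      rw [dif_pos hex', hfind', if_pos hm']
    have hinv : mergeL r (splitL I r L) = L := mergeL_splitL hr
    have hseq : seqMul [I, X \ I] (splitL I r L) = seqMul [I, X \ I] L := by
      have hJX : blk L r ⊆ X := chain_blk_subset hc hr
      conv_rhs => rw [blk_decomp hr]
      unfold splitL
      rw [seqMul_append_right, seqMul_append_right]
      rw [seqMul_hat_split hJX hs.2.1 hs.2.2.1]
    refine ⟨hio ▸ hchain', hio ▸ hseq, ?_, ?_⟩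
    · rw [hio, hio2, hinv]
    · rw [hio, length_splitL hr]
      omega

lemma seqMul_singleton_X {X : Finset α} :
    ∀ {b : List (Finset α)}, (∀ J ∈ b, J ⊆ X) → (∀ J ∈ b, J ≠ ∅) →
      seqMul [X] b = b := by
  intro b
  induction b with
  | nil => intro _ _; rfl
  | cons J t ih =>
    intro hsub hne
    rw [seqMul_cons_right]
    have hJX : X ∩ J = J := Finset.inter_eq_right.mpr (hsub J List.mem_cons_self)
    have hJne : J ≠ ∅ := hne J List.mem_cons_self
    rw [ih (fun K hK => hsub K (List.mem_cons_of_mem _ hK))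
      (fun K hK => hne K (List.mem_cons_of_mem _ hK))]
    simp [hJX, hJne]

end Aux





/-- `Î · U_S = 0` for every `I ∈ S'`, and consequently `(1−Î)·U_S = U_S`. -/
theorem hatI_mul_US {α : Type*} [DecidableEq α] [Fintype α] (X : Finset α)
    (hX : 2 ≤ X.card) (S : Set (Finset α)) (hS : IsParacell X S) :
    ∀ I ∈ opp X S,
      amul (hatI X I) (US X (opp X S)) = 0 ∧
      amul (oneA X - hatI X I) (US X (opp X S)) = US X (opp X S) := by
  intro I hI
  classical
  have hprop : ∀ A ∈ opp X S, A ⊆ X ∧ A ≠ ∅ ∧ A ≠ X := by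
    intro A hA
    obtain ⟨hAX, hXA⟩ := hA
    obtain ⟨-, hne, hnX⟩ := hS.2.1 _ hXA
    refine ⟨hAX, ?_, ?_⟩
    · intro h; subst h; exact hnX (by simp)
    · intro h; subst h; exact hne (by simp)
  have hclose : ∀ A ∈ opp X S, ∀ B ∈ opp X S, A ∩ B ∈ opp X S ∨ A ∪ B ∈ opp X S := by
    intro A hA B hB
    obtain ⟨hAX, hXA⟩ := hA
    obtain ⟨hBX, hXB⟩ := hB
    rcases hS.2.2 _ hXA _ hXB with h | h
    · right
      refine ⟨Finset.union_subset hAX hBX, ?_⟩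
      show X \ (A ∪ B) ∈ S
      rw [Finset.sdiff_union_distrib]
      exact h
    · left
      refine ⟨(Finset.inter_subset_left).trans hAX, ?_⟩
      show X \ (A ∩ B) ∈ S
      have e : X \ (A ∩ B) = (X \ A) ∪ (X \ B) := by ext x; simp; tauto
      rw [e]
      exact h
  have hUS : ∀ b, (US X (opp X S)) b =
      if IsChainFor X (opp X S) b then (-1 : ℂ) ^ (b.length - 1) else 0 := by
    intro b
    rw [US, Finsupp.ofSupportFinite_coe]
  have hsupp : ∀ b, b ∈ (US X (opp X S)).support ↔ IsChainFor X (opp X S) b := by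
    intro b
    rw [Finsupp.mem_support_iff, hUS]
    constructor
    · intro h
      by_contra hcon
      simp [hcon] at h
    · intro h
      simp only [h, if_true]
      exact pow_ne_zero _ (by norm_num)
  have key : amul (hatI X I) (US X (opp X S)) = 0 := by
    unfold amul hatI
    rw [Finsupp.sum_single_index (by simp)]
    simp only [one_mul]
    show ∑ b ∈ (US X (opp X S)).support,
      Finsupp.single (seqMul [I, X \ I] b) ((US X (opp X S)) b) = 0
    refine Finset.sum_involution (fun b _ => iot I (opp X S) b) ?_ ?_ ?_ ?_
    · intro b hb
      have hcb : IsChainFor X (opp X S) b := (hsupp b).mp hb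
      obtain ⟨hch, hseq, hinv, hlen⟩ := iot_spec hprop hclose hI hcb
      rw [hseq, ← Finsupp.single_add, hUS, hUS, if_pos hcb, if_pos hch]
      have hb1 : 1 ≤ b.length := List.length_pos_iff.mpr hcb.1.1
      have hz : (-1 : ℂ) ^ (b.length - 1) + (-1 : ℂ) ^ ((iot I (opp X S) b).length - 1) = 0 := by
        rcases hlen with h | h
        · rw [h, show b.length + 1 - 1 = (b.length - 1) + 1 by omega, pow_succ]
          ring
        · have h1 : 1 ≤ (iot I (opp X S) b).length := List.length_pos_iff.mpr hch.1.1
          rw [show b.length - 1 = ((iot I (opp X S) b).length - 1) + 1 by omega, pow_succ]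
          ring
      rw [hz, Finsupp.single_zero]
    · intro b hb _
      obtain ⟨-, -, -, hlen⟩ := iot_spec hprop hclose hI ((hsupp b).mp hb)
      intro hcon
      have hcon' : iot I (opp X S) b = b := hcon
      rw [hcon'] at hlen
      omega
    · intro b hb
      obtain ⟨hch, -, -, -⟩ := iot_spec hprop hclose hI ((hsupp b).mp hb)
      exact (hsupp _).mpr hch
    · intro b hb
      obtain ⟨-, -, hinv, -⟩ := iot_spec hprop hclose hI ((hsupp b).mp hb)
      exact hinv
  have hone : amul (oneA X) (US X (opp X S)) = US X (opp X S) := by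
    unfold amul oneA
    rw [Finsupp.sum_single_index (by simp)]
    simp only [one_mul]
    show ∑ b ∈ (US X (opp X S)).support,
      Finsupp.single (seqMul [X] b) ((US X (opp X S)) b) = US X (opp X S)
    have hcg : ∀ b ∈ (US X (opp X S)).support,
        Finsupp.single (seqMul [X] b) ((US X (opp X S)) b) =
        Finsupp.single b ((US X (opp X S)) b) := by
      intro b hb
      have hcb : IsChainFor X (opp X S) b := (hsupp b).mp hb
      have hsub : ∀ J ∈ b, J ⊆ X := by
        intro J hJ
        have h := subset_foldrU hJ
        rwa [hcb.1.2.2.2] at h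
      rw [seqMul_singleton_X hsub hcb.1.2.1]
    rw [Finset.sum_congr rfl hcg]
    exact Finsupp.sum_single _
  have hsubl : amul (oneA X - hatI X I) (US X (opp X S)) =
      amul (oneA X) (US X (opp X S)) - amul (hatI X I) (US X (opp X S)) := by
    unfold amul
    apply Finsupp.sum_sub_index
    intro a b₁ b₂
    rw [← Finsupp.sum_sub]
    apply Finsupp.sum_congr
    intro b _
    rw [sub_mul, Finsupp.single_sub]
  exact ⟨key, by rw [hsubl, hone, key, sub_zero]⟩

end GRF
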